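/- Let δ ∈ (0,1), ε ∈ (0,1], u > 0 and n ≥ 1. Let X₁, …, Xₙ be i.i.d. real-valued random variables with mean μ = E[X₁] and raw moment bound E[|X₁|^{1+ε}] ≤ u. Define the truncated empirical mean μ̂_T = (1/n) ∑_{t=1}^n X_t · 𝟙{ |X_t| ≤ (u t / log(1/δ))^{1/(1+ε)} }. Then with probability at least 1 − δ, μ̂_T ≤ μ + 4 u^{1/(1+ε)} (log(1/δ) / n)^{ε/(1+ε)}. -/

import Mathlib

open MeasureTheory ProbabilityTheory Real

lemma exp_le_one_add_add_sq {x : ℝ} (hx : |x| ≤ 1) : Real.exp x ≤ 1 + x + x ^ 2 := by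
  have h := Real.exp_bound hx (n := 2) (by norm_num)
  have h2 : (∑ m ∈ Finset.range 2, x ^ m / m.factorial) = 1 + x := by
    simp [Finset.sum_range_succ]
  have h3 : (((2:ℕ).succ : ℝ) / (((2:ℕ).factorial : ℝ) * (2:ℕ))) = 3/4 := by norm_num
  rw [h2] at h
  rw [h3] at h
  have h4 := abs_le.mp h
  nlinarith [sq_nonneg x, sq_abs x]

lemma sum_rpow_neg_half_le (n : ℕ) :
    ∑ t ∈ Finset.range n, ((t : ℝ) + 1) ^ (-(1/2) : ℝ) ≤ 2 * (n : ℝ) ^ ((1/2) : ℝ) := by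
  induction n with
  | zero => simp
  | succ n ih =>
    rw [Finset.sum_range_succ]
    have hn0 : (0:ℝ) ≤ (n:ℝ) := by positivity
    have hn1 : (0:ℝ) < (n:ℝ) + 1 := by positivity
    set a : ℝ := ((n:ℝ)+1) ^ ((1/2):ℝ) with ha
    set b : ℝ := (n:ℝ) ^ ((1/2):ℝ) with hb
    have ha0 : 0 < a := Real.rpow_pos_of_pos hn1 _
    have hb0 : 0 ≤ b := Real.rpow_nonneg hn0 _
    have ha2 : a ^ 2 = (n:ℝ) + 1 := by
      rw [ha, ← Real.rpow_natCast (((n:ℝ)+1) ^ ((1/2):ℝ)) 2, ← Real.rpow_mul hn1.le]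
      norm_num
    have hb2 : b ^ 2 = (n:ℝ) := by
      rw [hb, ← Real.rpow_natCast ((n:ℝ) ^ ((1/2):ℝ)) 2, ← Real.rpow_mul hn0]
      norm_num
    have hinv : ((n:ℝ) + 1) ^ (-(1/2) : ℝ) = a⁻¹ := by
      rw [ha, ← Real.rpow_neg hn1.le]
    have key : a⁻¹ ≤ 2 * a - 2 * b := by
      rw [inv_le_iff_one_le_mul₀ ha0]
      nlinarith [sq_nonneg (a - b), sq_nonneg (a*b)]
    have : (n:ℝ) = ((n:ℕ):ℝ) := rfl
    push_cast
    rw [hinv]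
    have : ((n:ℝ) + 1) ^ ((1/2):ℝ) = a := rfl
    linarith [ih]

lemma sum_rpow_le (n : ℕ) (hn : 1 ≤ n) {q : ℝ} (hq : 1/2 ≤ q) :
    ∑ t ∈ Finset.range n, ((t : ℝ) + 1) ^ (q - 1) ≤ 2 * (n : ℝ) ^ q := by
  have hn0 : (0:ℝ) < (n:ℝ) := by exact_mod_cast hn
  have step : ∀ t ∈ Finset.range n,
      ((t : ℝ) + 1) ^ (q - 1) ≤ (n : ℝ) ^ (q - 1/2) * ((t : ℝ) + 1) ^ (-(1/2) : ℝ) := by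
    intro t ht
    have htn : (t : ℝ) + 1 ≤ (n : ℝ) := by
      have := Finset.mem_range.mp ht
      exact_mod_cast Nat.succ_le_of_lt this
    have ht0 : (0:ℝ) < (t:ℝ) + 1 := by positivity
    calc ((t : ℝ) + 1) ^ (q - 1)
        = ((t : ℝ) + 1) ^ (q - 1/2) * ((t : ℝ) + 1) ^ (-(1/2) : ℝ) := by
          rw [← Real.rpow_add ht0]; ring_nf
      _ ≤ (n : ℝ) ^ (q - 1/2) * ((t : ℝ) + 1) ^ (-(1/2) : ℝ) := by
          have h1 : ((t : ℝ) + 1) ^ (q - 1/2) ≤ (n : ℝ) ^ (q - 1/2) :=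
            Real.rpow_le_rpow ht0.le htn (by linarith)
          have h2 : (0:ℝ) ≤ ((t : ℝ) + 1) ^ (-(1/2) : ℝ) := Real.rpow_nonneg ht0.le _
          exact mul_le_mul_of_nonneg_right h1 h2
  calc ∑ t ∈ Finset.range n, ((t : ℝ) + 1) ^ (q - 1)
      ≤ ∑ t ∈ Finset.range n, (n : ℝ) ^ (q - 1/2) * ((t : ℝ) + 1) ^ (-(1/2) : ℝ) :=
        Finset.sum_le_sum step
    _ = (n : ℝ) ^ (q - 1/2) * ∑ t ∈ Finset.range n, ((t : ℝ) + 1) ^ (-(1/2) : ℝ) := by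
        rw [Finset.mul_sum]
    _ ≤ (n : ℝ) ^ (q - 1/2) * (2 * (n : ℝ) ^ ((1/2) : ℝ)) :=
        mul_le_mul_of_nonneg_left (sum_rpow_neg_half_le n) (Real.rpow_nonneg hn0.le _)
    _ = 2 * (n : ℝ) ^ q := by
        rw [← mul_assoc, mul_comm ((n : ℝ) ^ (q - 1/2)) 2, mul_assoc, ← Real.rpow_add hn0]
        ring_nf

lemma eq_of_log_eq {a b : ℝ} (ha : 0 < a) (hb : 0 < b) (h : Real.log a = Real.log b) : a = b := by
  rw [← Real.exp_log ha, ← Real.exp_log hb, h]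

lemma integrable_of_bdd {Ω : Type*} [MeasurableSpace Ω] {P : Measure Ω} [IsFiniteMeasure P]
    {f : Ω → ℝ} (hf : Measurable f) {C : ℝ} (h : ∀ ω, |f ω| ≤ C) : Integrable f P :=
  ⟨hf.aestronglyMeasurable, HasFiniteIntegral.of_bounded (C := C) (Filter.Eventually.of_forall h)⟩

set_option maxHeartbeats 1600000 in
/-- Concentration of the truncated empirical mean under a raw `(1+ε)`-moment bound
(Lemma 1 of Bubeck et al.): with probability at least `1 − δ`,
`μ̂_T ≤ μ + 4 u^{1/(1+ε)} (log(1/δ)/n)^{ε/(1+ε)}`. -/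
theorem truncated_mean_concentration {Ω : Type*} [MeasurableSpace Ω] (P : Measure Ω)
    [IsProbabilityMeasure P]
    (δ ε u μ : ℝ) (hδ : δ ∈ Set.Ioo (0 : ℝ) 1) (hε : ε ∈ Set.Ioc (0 : ℝ) 1) (hu : 0 < u)
    (n : ℕ) (hn : 1 ≤ n) (X : Fin n → Ω → ℝ)
    (hmeas : ∀ i, Measurable (X i))
    (hindep : iIndepFun X P)
    (hident : ∀ i, IdentDistrib (X i) (X ⟨0, hn⟩) P P)
    (hint : Integrable (X ⟨0, hn⟩) P)
    (hmean : ∫ ω, X ⟨0, hn⟩ ω ∂P = μ)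
    (hmom_int : Integrable (fun ω => |X ⟨0, hn⟩ ω| ^ (1 + ε)) P)
    (hmom : ∫ ω, |X ⟨0, hn⟩ ω| ^ (1 + ε) ∂P ≤ u) :
    ENNReal.ofReal (1 - δ) ≤
      P {ω | (1 / n : ℝ) * ∑ i : Fin n,
              (if |X i ω| ≤ (u * ((i : ℕ) + 1) / Real.log (1 / δ)) ^ (1 / (1 + ε))
                then X i ω else 0)
            ≤ μ + 4 * u ^ (1 / (1 + ε)) * (Real.log (1 / δ) / n) ^ (ε / (1 + ε))} := by
  obtain ⟨hδ0, hδ1⟩ := hδ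
  obtain ⟨hε0, hε1⟩ := hε
  have hn0 : (0:ℝ) < (n:ℝ) := by exact_mod_cast hn
  have hp0 : (0:ℝ) < 1 + ε := by linarith
  set q : ℝ := 1 / (1 + ε) with hqdef
  have hq0 : 0 < q := by positivity
  have hqp : q * (1 + ε) = 1 := by rw [hqdef]; field_simp
  have hqhalf : 1/2 ≤ q := by
    rw [hqdef, le_div_iff₀ hp0]; linarith
  set L : ℝ := Real.log (1 / δ) with hLdef
  have hL0 : 0 < L := Real.log_pos (by rw [lt_div_iff₀ hδ0]; linarith)
  set X0 : Ω → ℝ := X ⟨0, hn⟩ with hX0def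
  have hX0meas : Measurable X0 := hmeas _
  set B : Fin n → ℝ := fun i => (u * ((i:ℕ) + 1) / L) ^ q with hBdef
  have hBpos : ∀ i, 0 < B i := fun i => Real.rpow_pos_of_pos (by positivity) _
  set lam : ℝ := (L / (u * n)) ^ q with hlamdef
  have hlam0 : 0 < lam := Real.rpow_pos_of_pos (by positivity) _
  set φ : Fin n → ℝ → ℝ := fun i x => if |x| ≤ B i then x else 0 with hφdef
  have hφmeas : ∀ i, Measurable (φ i) := fun i =>
    Measurable.ite (measurableSet_le measurable_abs measurable_const) measurable_id
      measurable_const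
  set Y : Fin n → Ω → ℝ := fun i => φ i ∘ X i with hYdef
  have hYmeas : ∀ i, Measurable (Y i) := fun i => (hφmeas i).comp (hmeas i)
  have hφbdd : ∀ i x, |φ i x| ≤ B i := by
    intro i x
    by_cases h : |x| ≤ B i
    · simp only [hφdef, if_pos h]; exact h
    · simp only [hφdef, if_neg h, abs_zero]; exact (hBpos i).le
  -- log expansions
  have hi0 : ∀ i : Fin n, (0:ℝ) < ((i:ℕ):ℝ) + 1 := fun i => by positivity
  have hlogB : ∀ i : Fin n, Real.log (B i)
      = q * (Real.log u + Real.log (((i:ℕ):ℝ) + 1) - Real.log L) := by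
    intro i
    rw [hBdef]
    rw [Real.log_rpow (by positivity), Real.log_div (by positivity) hL0.ne',
      Real.log_mul hu.ne' (hi0 i).ne']
  have hloglam : Real.log lam = q * (Real.log L - (Real.log u + Real.log n)) := by
    rw [hlamdef, Real.log_rpow (by positivity), Real.log_div hL0.ne' (by positivity),
      Real.log_mul hu.ne' hn0.ne']
  -- key per-index identities
  have hBεpos : ∀ i : Fin n, (0:ℝ) < (B i) ^ ε := fun i => Real.rpow_pos_of_pos (hBpos i) _
  have I2 : ∀ i : Fin n, lam * (u / (B i) ^ ε)
      = L * ((n:ℝ) ^ (-q) * (((i:ℕ):ℝ) + 1) ^ (q - 1)) := by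
    intro i
    apply eq_of_log_eq (by positivity) (by positivity)
    rw [Real.log_mul hlam0.ne' (div_pos hu (hBεpos i)).ne',
      Real.log_div hu.ne' (hBεpos i).ne', Real.log_rpow (hBpos i), hlogB i, hloglam,
      Real.log_mul hL0.ne' (by positivity),
      Real.log_mul (by positivity : ((n:ℝ) ^ (-q) : ℝ) ≠ 0) (by positivity),
      Real.log_rpow hn0, Real.log_rpow (hi0 i)]
    linear_combination (Real.log L - Real.log u - Real.log (((i:ℕ):ℝ) + 1)) * hqp
  have I3 : ∀ i : Fin n, lam ^ 2 * (u * (B i) ^ (1 - ε))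
      = L * ((n:ℝ) ^ (-(2*q)) * (((i:ℕ):ℝ) + 1) ^ (2*q - 1)) := by
    intro i
    have hB1ε : (0:ℝ) < (B i) ^ (1 - ε) := Real.rpow_pos_of_pos (hBpos i) _
    apply eq_of_log_eq (by positivity) (by positivity)
    rw [Real.log_mul (by positivity) (mul_pos hu hB1ε).ne',
      Real.log_mul hu.ne' hB1ε.ne', Real.log_pow, Real.log_rpow (hBpos i), hlogB i, hloglam,
      Real.log_mul hL0.ne' (by positivity),
      Real.log_mul (by positivity : ((n:ℝ) ^ (-(2*q)) : ℝ) ≠ 0) (by positivity),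
      Real.log_rpow hn0, Real.log_rpow (hi0 i)]
    push_cast
    linear_combination (Real.log L - Real.log u - Real.log (((i:ℕ):ℝ) + 1)) * hqp
  have hεq2 : ε / (1 + ε) = ε * q := by rw [hqdef]; ring
  have I4 : lam * ((n:ℝ) * (4 * u ^ q * (L / (n:ℝ)) ^ (ε / (1 + ε)))) = 4 * L := by
    rw [hεq2]
    have hLn : (0:ℝ) < (L / (n:ℝ)) ^ (ε * q) := Real.rpow_pos_of_pos (by positivity) _
    apply eq_of_log_eq (by positivity) (by positivity)
    rw [Real.log_mul hlam0.ne' (by positivity), hloglam,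
      Real.log_mul hn0.ne' (by positivity),
      Real.log_mul (by positivity : (4 * u ^ q : ℝ) ≠ 0) hLn.ne',
      Real.log_mul (by norm_num : (4:ℝ) ≠ 0) (by positivity),
      Real.log_rpow hu, Real.log_rpow (by positivity),
      Real.log_div hL0.ne' hn0.ne',
      Real.log_mul (by norm_num : (4:ℝ) ≠ 0) hL0.ne']
    linear_combination (Real.log L - Real.log n) * hqp
  have hlamB : ∀ i : Fin n, lam * B i ≤ 1 := by
    intro i
    have heq : lam * B i = ((((i:ℕ):ℝ) + 1) / n) ^ q := by
      rw [hlamdef, hBdef, ← Real.mul_rpow (by positivity) (by positivity)]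
      congr 1
      field_simp
    rw [heq]
    apply Real.rpow_le_one (by positivity) _ hq0.le
    rw [div_le_one hn0]
    have := i.2
    exact_mod_cast this
  -- integrability of truncated variables
  have hφint : ∀ i : Fin n, Integrable (fun ω => φ i (X0 ω)) P := fun i =>
    integrable_of_bdd ((hφmeas i).comp hX0meas) (fun ω => hφbdd i (X0 ω))
  have hφsqint : ∀ i : Fin n, Integrable (fun ω => (φ i (X0 ω)) ^ 2) P := by
    intro i
    apply integrable_of_bdd (((hφmeas i).comp hX0meas).pow_const 2) (C := (B i) ^ 2)
    intro ω
    rw [abs_pow, ← sq_abs]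
    apply pow_le_pow_left₀ (abs_nonneg _) _ 2
    rw [abs_abs]
    exact hφbdd i (X0 ω)
  -- first moment bound
  have hEYle : ∀ i : Fin n, ∫ ω, φ i (X0 ω) ∂P ≤ μ + u / (B i) ^ ε := by
    intro i
    have hpt : ∀ ω, φ i (X0 ω) ≤ X0 ω + |X0 ω| ^ (1 + ε) / (B i) ^ ε := by
      intro ω
      by_cases h : |X0 ω| ≤ B i
      · simp only [hφdef, if_pos h]
        have : (0:ℝ) ≤ |X0 ω| ^ (1 + ε) / (B i) ^ ε := by positivity
        linarith
      · simp only [hφdef, if_neg h]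
        have hBlt : B i < |X0 ω| := not_le.mp h
        have hx0 : (0:ℝ) < |X0 ω| := (hBpos i).trans hBlt
        have h1 : (B i) ^ ε ≤ |X0 ω| ^ ε := Real.rpow_le_rpow (hBpos i).le hBlt.le hε0.le
        have h2 : |X0 ω| ^ (1 + ε) / |X0 ω| ^ ε ≤ |X0 ω| ^ (1 + ε) / (B i) ^ ε :=
          div_le_div_of_nonneg_left (Real.rpow_nonneg (abs_nonneg _) _) (hBεpos i) h1
        have h3 : |X0 ω| ^ (1 + ε) / |X0 ω| ^ ε = |X0 ω| := by
          rw [Real.rpow_add hx0, Real.rpow_one]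
          field_simp
        rw [h3] at h2
        have := neg_abs_le (X0 ω)
        linarith
    have hint2 : Integrable (fun ω => X0 ω + |X0 ω| ^ (1 + ε) / (B i) ^ ε) P :=
      hint.add (hmom_int.div_const _)
    calc ∫ ω, φ i (X0 ω) ∂P ≤ ∫ ω, (X0 ω + |X0 ω| ^ (1 + ε) / (B i) ^ ε) ∂P :=
          integral_mono (hφint i) hint2 hpt
      _ = μ + (∫ ω, |X0 ω| ^ (1 + ε) ∂P) / (B i) ^ ε := by
          rw [integral_add hint (hmom_int.div_const _), integral_div, hmean]
      _ ≤ μ + u / (B i) ^ ε := by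
          gcongr
  -- second moment bound
  have hESle : ∀ i : Fin n, ∫ ω, (φ i (X0 ω)) ^ 2 ∂P ≤ u * (B i) ^ (1 - ε) := by
    intro i
    have hB1ε : (0:ℝ) < (B i) ^ (1 - ε) := Real.rpow_pos_of_pos (hBpos i) _
    have hpt : ∀ ω, (φ i (X0 ω)) ^ 2 ≤ (B i) ^ (1 - ε) * |X0 ω| ^ (1 + ε) := by
      intro ω
      by_cases h : |X0 ω| ≤ B i
      · simp only [hφdef, if_pos h]
        have hsum : (1 - ε) + (1 + ε) = 2 := by ring
        have e1 : |X0 ω| ^ ((2:ℝ)) = |X0 ω| ^ (1 - ε) * |X0 ω| ^ (1 + ε) := by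
          rw [← Real.rpow_add' (abs_nonneg _) (by rw [hsum]; norm_num), hsum]
        have e2 : (X0 ω) ^ 2 = |X0 ω| ^ ((2:ℝ)) := by
          rw [show ((2:ℝ)) = ((2:ℕ):ℝ) by norm_num, Real.rpow_natCast, sq_abs]
        rw [e2, e1]
        apply mul_le_mul_of_nonneg_right _ (Real.rpow_nonneg (abs_nonneg _) _)
        exact Real.rpow_le_rpow (abs_nonneg _) h (by linarith)
      · simp only [hφdef, if_neg h]
        have : (0:ℝ) ≤ (B i) ^ (1 - ε) * |X0 ω| ^ (1 + ε) := by positivity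
        simpa using this
    calc ∫ ω, (φ i (X0 ω)) ^ 2 ∂P ≤ ∫ ω, (B i) ^ (1 - ε) * |X0 ω| ^ (1 + ε) ∂P :=
          integral_mono (hφsqint i) (hmom_int.const_mul _) hpt
      _ = (B i) ^ (1 - ε) * ∫ ω, |X0 ω| ^ (1 + ε) ∂P := integral_const_mul _ _
      _ ≤ (B i) ^ (1 - ε) * u := by gcongr
      _ = u * (B i) ^ (1 - ε) := mul_comm _ _
  -- mgf bound per index
  have hmgf : ∀ i : Fin n, mgf (Y i) P lam
      ≤ Real.exp (lam * (μ + u / (B i) ^ ε) + lam ^ 2 * (u * (B i) ^ (1 - ε))) := by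
    intro i
    have hconv : mgf (Y i) P lam = ∫ ω, Real.exp (lam * φ i (X0 ω)) ∂P := by
      have hid : IdentDistrib (fun ω => Real.exp (lam * φ i (X i ω)))
          (fun ω => Real.exp (lam * φ i (X0 ω))) P P :=
        (hident i).comp (((hφmeas i).const_mul lam).exp)
      exact hid.integral_eq
    have hbd1 : ∀ ω, |lam * φ i (X0 ω)| ≤ 1 := by
      intro ω
      rw [abs_mul, abs_of_pos hlam0]
      calc lam * |φ i (X0 ω)| ≤ lam * B i :=
            mul_le_mul_of_nonneg_left (hφbdd i (X0 ω)) hlam0.le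
        _ ≤ 1 := hlamB i
    have hexpint : Integrable (fun ω => Real.exp (lam * φ i (X0 ω))) P := by
      apply integrable_of_bdd (((hφmeas i).comp hX0meas).const_mul lam).exp
        (C := Real.exp 1)
      intro ω
      rw [abs_of_pos (Real.exp_pos _), Real.exp_le_exp]
      exact (le_abs_self _).trans (hbd1 ω)
    have hrhsint : Integrable
        (fun ω => 1 + lam * φ i (X0 ω) + lam ^ 2 * (φ i (X0 ω)) ^ 2) P :=
      ((integrable_const 1).add ((hφint i).const_mul lam)).add ((hφsqint i).const_mul _)
    have hptexp : ∀ ω, Real.exp (lam * φ i (X0 ω))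
        ≤ 1 + lam * φ i (X0 ω) + lam ^ 2 * (φ i (X0 ω)) ^ 2 := by
      intro ω
      have := exp_le_one_add_add_sq (hbd1 ω)
      calc Real.exp (lam * φ i (X0 ω))
          ≤ 1 + lam * φ i (X0 ω) + (lam * φ i (X0 ω)) ^ 2 := this
        _ = 1 + lam * φ i (X0 ω) + lam ^ 2 * (φ i (X0 ω)) ^ 2 := by ring
    calc mgf (Y i) P lam = ∫ ω, Real.exp (lam * φ i (X0 ω)) ∂P := hconv
      _ ≤ ∫ ω, (1 + lam * φ i (X0 ω) + lam ^ 2 * (φ i (X0 ω)) ^ 2) ∂P :=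
          integral_mono hexpint hrhsint hptexp
      _ = 1 + lam * ∫ ω, φ i (X0 ω) ∂P + lam ^ 2 * ∫ ω, (φ i (X0 ω)) ^ 2 ∂P := by
          have hf1 : Integrable (fun ω => 1 + lam * φ i (X0 ω)) P :=
            (integrable_const 1).add ((hφint i).const_mul lam)
          rw [integral_add hf1 ((hφsqint i).const_mul _),
            integral_add (integrable_const 1) ((hφint i).const_mul lam),
            integral_const_mul, integral_const_mul, integral_const]
          simp
      _ ≤ 1 + lam * (μ + u / (B i) ^ ε) + lam ^ 2 * (u * (B i) ^ (1 - ε)) := by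
          gcongr
          · exact hEYle i
          · exact hESle i
      _ ≤ Real.exp (lam * (μ + u / (B i) ^ ε) + lam ^ 2 * (u * (B i) ^ (1 - ε))) := by
          have := Real.add_one_le_exp
            (lam * (μ + u / (B i) ^ ε) + lam ^ 2 * (u * (B i) ^ (1 - ε)))
          linarith
  -- independence of truncated variables
  have hindepY : iIndepFun Y P := hindep.comp φ hφmeas
  -- sum of exponent bounds
  have hsumexp : ∑ i : Fin n, (lam * (μ + u / (B i) ^ ε) + lam ^ 2 * (u * (B i) ^ (1 - ε)))
      ≤ lam * ((n:ℝ) * μ) + 3 * L := by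
    have hsplit : ∀ i : Fin n,
        lam * (μ + u / (B i) ^ ε) + lam ^ 2 * (u * (B i) ^ (1 - ε))
          = lam * μ + (L * ((n:ℝ) ^ (-q) * (((i:ℕ):ℝ) + 1) ^ (q - 1))
              + L * ((n:ℝ) ^ (-(2*q)) * (((i:ℕ):ℝ) + 1) ^ (2*q - 1))) := by
      intro i
      rw [← I2 i, ← I3 i]; ring
    have hT1 : ∑ i : Fin n, L * ((n:ℝ) ^ (-q) * (((i:ℕ):ℝ) + 1) ^ (q - 1)) ≤ 2 * L := by
      have e : ∑ i : Fin n, L * ((n:ℝ) ^ (-q) * (((i:ℕ):ℝ) + 1) ^ (q - 1))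
          = (L * (n:ℝ) ^ (-q)) * ∑ t ∈ Finset.range n, ((t:ℝ) + 1) ^ (q - 1) := by
        rw [← Fin.sum_univ_eq_sum_range (fun t => ((t:ℝ) + 1) ^ (q - 1)) n, Finset.mul_sum]
        exact Finset.sum_congr rfl (fun i _ => by ring)
      rw [e]
      have hnn : (n:ℝ) ^ (-q) * (n:ℝ) ^ q = 1 := by
        rw [← Real.rpow_add hn0]; simp
      calc (L * (n:ℝ) ^ (-q)) * ∑ t ∈ Finset.range n, ((t:ℝ) + 1) ^ (q - 1)
          ≤ (L * (n:ℝ) ^ (-q)) * (2 * (n:ℝ) ^ q) :=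
            mul_le_mul_of_nonneg_left (sum_rpow_le n hn hqhalf) (by positivity)
        _ = 2 * L := by linear_combination 2 * L * hnn
    have hT2 : ∑ i : Fin n, L * ((n:ℝ) ^ (-(2*q)) * (((i:ℕ):ℝ) + 1) ^ (2*q - 1)) ≤ L := by
      have hper : ∀ i : Fin n,
          L * ((n:ℝ) ^ (-(2*q)) * (((i:ℕ):ℝ) + 1) ^ (2*q - 1))
            ≤ L * ((n:ℝ) ^ (-(2*q)) * (n:ℝ) ^ (2*q - 1)) := by
        intro i
        have hin : (((i:ℕ):ℝ) + 1) ≤ (n:ℝ) := by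
          have := i.2
          exact_mod_cast Nat.succ_le_of_lt this
        have := Real.rpow_le_rpow (hi0 i).le hin (by linarith : (0:ℝ) ≤ 2*q - 1)
        have h2 : (0:ℝ) ≤ (n:ℝ) ^ (-(2*q)) := by positivity
        nlinarith [hL0.le, mul_le_mul_of_nonneg_left this h2]
      have hnn2 : (n:ℝ) * ((n:ℝ) ^ (-(2*q)) * (n:ℝ) ^ (2*q - 1)) = 1 := by
        rw [← Real.rpow_add hn0]
        rw [show -(2*q) + (2*q - 1) = -1 by ring, Real.rpow_neg_one]
        field_simp
      calc ∑ i : Fin n, L * ((n:ℝ) ^ (-(2*q)) * (((i:ℕ):ℝ) + 1) ^ (2*q - 1))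
          ≤ ∑ _i : Fin n, L * ((n:ℝ) ^ (-(2*q)) * (n:ℝ) ^ (2*q - 1)) :=
            Finset.sum_le_sum (fun i _ => hper i)
        _ = (n:ℝ) * (L * ((n:ℝ) ^ (-(2*q)) * (n:ℝ) ^ (2*q - 1))) := by
            rw [Finset.sum_const, Finset.card_univ, Fintype.card_fin, nsmul_eq_mul]
        _ = L := by linear_combination L * hnn2
    calc ∑ i : Fin n, (lam * (μ + u / (B i) ^ ε) + lam ^ 2 * (u * (B i) ^ (1 - ε)))
        = ∑ i : Fin n, (lam * μ + (L * ((n:ℝ) ^ (-q) * (((i:ℕ):ℝ) + 1) ^ (q - 1))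
            + L * ((n:ℝ) ^ (-(2*q)) * (((i:ℕ):ℝ) + 1) ^ (2*q - 1)))) :=
          Finset.sum_congr rfl (fun i _ => hsplit i)
      _ = (n:ℝ) * (lam * μ)
          + (∑ i : Fin n, L * ((n:ℝ) ^ (-q) * (((i:ℕ):ℝ) + 1) ^ (q - 1))
            + ∑ i : Fin n, L * ((n:ℝ) ^ (-(2*q)) * (((i:ℕ):ℝ) + 1) ^ (2*q - 1))) := by
          rw [Finset.sum_add_distrib, Finset.sum_add_distrib, Finset.sum_const,
            Finset.card_univ, Fintype.card_fin, nsmul_eq_mul]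
      _ ≤ lam * ((n:ℝ) * μ) + 3 * L := by
          have hh : (n:ℝ) * (lam * μ) = lam * ((n:ℝ) * μ) := by ring
          linarith [hT1, hT2]
  -- mgf of the sum
  set S : Ω → ℝ := fun ω => ∑ i : Fin n, Y i ω with hSdef
  have hSeq : (∑ i : Fin n, Y i) = S := by
    funext ω; rw [Finset.sum_apply]
  have hSmeas : Measurable S := Finset.measurable_sum _ (fun i _ => hYmeas i)
  have hmgfS_le : mgf S P lam ≤ Real.exp (lam * ((n:ℝ) * μ) + 3 * L) := by
    rw [← hSeq, hindepY.mgf_sum hYmeas Finset.univ]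
    calc ∏ i : Fin n, mgf (Y i) P lam
        ≤ ∏ i : Fin n, Real.exp (lam * (μ + u / (B i) ^ ε)
            + lam ^ 2 * (u * (B i) ^ (1 - ε))) :=
          Finset.prod_le_prod (fun i _ => mgf_nonneg) (fun i _ => hmgf i)
      _ = Real.exp (∑ i : Fin n, (lam * (μ + u / (B i) ^ ε)
            + lam ^ 2 * (u * (B i) ^ (1 - ε)))) := by rw [← Real.exp_sum]
      _ ≤ Real.exp (lam * ((n:ℝ) * μ) + 3 * L) := by
          rw [Real.exp_le_exp]; exact hsumexp
  set c : ℝ := μ + 4 * u ^ q * (L / (n:ℝ)) ^ (ε / (1 + ε)) with hcdef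
  have h4 : lam * ((n:ℝ) * c) = lam * ((n:ℝ) * μ) + 4 * L := by
    rw [hcdef]
    linear_combination I4
  have hexpL : Real.exp (-L) = δ := by
    rw [Real.exp_neg, hLdef, Real.exp_log (by positivity), one_div, inv_inv]
  have hSint : Integrable (fun ω => Real.exp (lam * S ω)) P := by
    apply integrable_of_bdd (hSmeas.const_mul lam).exp
      (C := Real.exp (lam * ∑ i : Fin n, B i))
    intro ω
    rw [abs_of_pos (Real.exp_pos _), Real.exp_le_exp]
    apply mul_le_mul_of_nonneg_left _ hlam0.le
    exact Finset.sum_le_sum (fun i _ => (le_abs_self _).trans (hφbdd i (X i ω)))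
  have hcher := measure_ge_le_exp_mul_mgf (X := S) (μ := P) ((n:ℝ) * c) hlam0.le hSint
  have htail : P {ω | (n:ℝ) * c ≤ S ω} ≤ ENNReal.ofReal δ := by
    rw [← ENNReal.ofReal_toReal (measure_ne_top P _)]
    apply ENNReal.ofReal_le_ofReal
    refine hcher.trans ?_
    calc Real.exp (-lam * ((n:ℝ) * c)) * mgf S P lam
        ≤ Real.exp (-lam * ((n:ℝ) * c)) * Real.exp (lam * ((n:ℝ) * μ) + 3 * L) :=
          mul_le_mul_of_nonneg_left hmgfS_le (Real.exp_pos _).le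
      _ = Real.exp (-lam * ((n:ℝ) * c) + (lam * ((n:ℝ) * μ) + 3 * L)) :=
          (Real.exp_add _ _).symm
      _ = Real.exp (-L) := by congr 1; linarith [h4]
      _ = δ := hexpL
  -- conclusion
  show ENNReal.ofReal (1 - δ) ≤ P {ω | (1 / n : ℝ) * S ω ≤ c}
  have hEmeas : MeasurableSet {ω | (1 / n : ℝ) * S ω ≤ c} :=
    measurableSet_le (hSmeas.const_mul _) measurable_const
  have hsub : {ω | (1 / n : ℝ) * S ω ≤ c}ᶜ ⊆ {ω | (n:ℝ) * c ≤ S ω} := by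
    intro ω hω
    simp only [Set.mem_compl_iff, Set.mem_setOf_eq, not_le] at hω
    rw [Set.mem_setOf_eq]
    have h2 : (n:ℝ) * ((1 / n : ℝ) * S ω) = S ω := by
      rw [← mul_assoc, mul_one_div, div_self hn0.ne', one_mul]
    have h3 : (n:ℝ) * c < (n:ℝ) * ((1 / n : ℝ) * S ω) := mul_lt_mul_of_pos_left hω hn0
    rw [h2] at h3
    exact h3.le
  have h1 : (1 : ENNReal) ≤ P {ω | (1 / n : ℝ) * S ω ≤ c} + ENNReal.ofReal δ := by
    have hcc := measure_add_measure_compl (μ := P) hEmeas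
    calc (1 : ENNReal) = P {ω | (1 / n : ℝ) * S ω ≤ c} + P ({ω | (1 / n : ℝ) * S ω ≤ c}ᶜ) := by
          rw [hcc, measure_univ]
      _ ≤ P {ω | (1 / n : ℝ) * S ω ≤ c} + ENNReal.ofReal δ :=
          add_le_add_right ((measure_mono hsub).trans htail) _
  calc ENNReal.ofReal (1 - δ) = 1 - ENNReal.ofReal δ := by
        rw [ENNReal.ofReal_sub _ hδ0.le, ENNReal.ofReal_one]
    _ ≤ P {ω | (1 / n : ℝ) * S ω ≤ c} := tsub_le_iff_right.mpr h1
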